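/- The distribution of y·x has Poincaré constant Ω(d): Let x ∼ N(0, I_d) and y ∼ N(0,1) be independent, set z = y·x ∈ ℝ^d, and let f(z) = ‖z‖₂². Then Var(f(z)) = E[y⁴‖x‖₂⁴] − (E[y²‖x‖₂²])² = 2d² + 6d and E[‖∇f(z)‖₂²] = E[4 y² ‖x‖₂²] = 4d, so that Var(f(z)) = ((d+3)/2) · E[‖∇f(z)‖₂²]. -/

import Mathlib

open MeasureTheory Matrix
open scoped BigOperators ENNReal NNReal

noncomputable section

/-- Squared Euclidean norm of a vector in `ℝ^d`. -/
def enormSq {d : ℕ} (x : Fin d → ℝ) : ℝ := ∑ i, x i ^ 2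

/-- Euclidean norm of a vector in `ℝ^d`. -/
def euclNorm {d : ℕ} (x : Fin d → ℝ) : ℝ := Real.sqrt (enormSq x)

/-- Frobenius norm of a matrix. -/
def frobNorm {m n : ℕ} (A : Matrix (Fin m) (Fin n) ℝ) : ℝ :=
  Real.sqrt (∑ i, ∑ j, A i j ^ 2)

/-- Spectral norm (ℓ₂ operator norm) of a square matrix. -/
def specNorm {d : ℕ} (A : Matrix (Fin d) (Fin d) ℝ) : ℝ :=
  ‖Matrix.toEuclideanCLM (𝕜 := ℝ) A‖

/-- Nuclear norm: the sum of the singular values. -/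
def nucNorm {d : ℕ} (A : Matrix (Fin d) (Fin d) ℝ) : ℝ :=
  ∑ i, Real.sqrt (((show (Aᵀ * A).IsHermitian by
    simpa [Matrix.conjTranspose_eq_transpose_of_trivial] using
      Matrix.isHermitian_conjTranspose_mul_self A)).eigenvalues i)

open scoped Classical in
/-- Best rank-`k` approximation of a symmetric matrix: keep the `k` largest eigenvalues
(ties broken by index) in an eigendecomposition; junk value `0` on non-symmetric input. -/
def Pk {d : ℕ} (k : ℕ) (A : Matrix (Fin d) (Fin d) ℝ) : Matrix (Fin d) (Fin d) ℝ :=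
  if hA : A.IsHermitian then
    (hA.eigenvectorUnitary : Matrix (Fin d) (Fin d) ℝ) *
      Matrix.diagonal (fun i =>
        if (Finset.univ.filter fun j =>
              hA.eigenvalues i < hA.eigenvalues j ∨
                (hA.eigenvalues i = hA.eigenvalues j ∧ j < i)).card < k
        then hA.eigenvalues i else 0) *
      star (hA.eigenvectorUnitary : Matrix (Fin d) (Fin d) ℝ)
  else 0

/-- A `d × k` matrix is semi-orthogonal if `Vᵀ V = I_k`. -/
def IsSemiOrtho {d k : ℕ} (V : Matrix (Fin d) (Fin k) ℝ) : Prop := Vᵀ * V = 1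

/-- `U` is a matrix of top-`k` singular vectors of the positive semidefinite matrix `M`:
it is semi-orthogonal and maximizes `Tr(Vᵀ M V)` among semi-orthogonal matrices. -/
def IsTopKSingular {d k : ℕ} (M : Matrix (Fin d) (Fin d) ℝ)
    (U : Matrix (Fin d) (Fin k) ℝ) : Prop :=
  IsSemiOrtho U ∧ ∀ V : Matrix (Fin d) (Fin k) ℝ, IsSemiOrtho V →
    (Vᵀ * M * V).trace ≤ (Uᵀ * M * U).trace

/-- `s` is an `α`-corruption of the sample `g`: as multisets, `s = (g \ L) ∪ E`
with `L ⊆ g` and `|E| = |L| ≤ α n`. -/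
def IsCorruptionOf {V : Type*} (α : ℝ) {n : ℕ} (g s : Fin n → V) : Prop :=
  ∃ L E : Multiset V, L ≤ (List.ofFn g : Multiset V) ∧
    Multiset.card E = Multiset.card L ∧ (Multiset.card L : ℝ) ≤ α * n ∧
    (List.ofFn s : Multiset V) + L = (List.ofFn g : Multiset V) + E

/-- The standard Gaussian measure `N(0, I_d)` on `ℝ^d`. -/
def stdGaussian (d : ℕ) : Measure (Fin d → ℝ) :=
  Measure.pi fun _ => ProbabilityTheory.gaussianReal 0 1

/-- Total variation distance between two measures. -/
def tvDist {Ω : Type*} [MeasurableSpace Ω] (μ ν : Measure Ω) : ℝ :=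
  ⨆ s : Set Ω, |(μ s).toReal - (ν s).toReal|
/-- Matrices over `ℝ` carry the Borel (product) σ-algebra. -/
instance matrixMeasurableSpace {m n : ℕ} : MeasurableSpace (Matrix (Fin m) (Fin n) ℝ) :=
  (inferInstance : MeasurableSpace (Fin m → Fin n → ℝ))


open ProbabilityTheory Real

local notation "γ" => ProbabilityTheory.gaussianReal (0:ℝ) (1:ℝ≥0)

private lemma half_rpow (y : ℝ) : (1/2 : ℝ) ^ y = (2:ℝ) ^ (-y) := by
  rw [show (1/2:ℝ) = 2⁻¹ by norm_num, Real.inv_rpow (by norm_num), ← Real.rpow_neg (by norm_num)]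

private lemma rpow_3h : (2:ℝ) ^ ((3:ℝ)/2) = 2 * Real.sqrt 2 := by
  rw [show (3:ℝ)/2 = 1 + 1/2 by norm_num, Real.rpow_add (by norm_num), Real.rpow_one,
    ← Real.sqrt_eq_rpow]

private lemma rpow_5h : (2:ℝ) ^ ((5:ℝ)/2) = 4 * Real.sqrt 2 := by
  rw [show (5:ℝ)/2 = 2 + 1/2 by norm_num, Real.rpow_add (by norm_num),
    ← Real.sqrt_eq_rpow, show (2:ℝ)^(2:ℝ) = ((2:ℝ)^(2:ℕ) : ℝ) by rw [← Real.rpow_natCast]; norm_num]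
  norm_num

private lemma gamma_32 : Real.Gamma (3/2) = Real.sqrt π / 2 := by
  rw [show (3:ℝ)/2 = 1/2 + 1 by norm_num, Real.Gamma_add_one (by norm_num), Real.Gamma_one_half_eq]
  ring

private lemma gamma_52 : Real.Gamma (5/2) = 3 * Real.sqrt π / 4 := by
  rw [show (5:ℝ)/2 = 3/2 + 1 by norm_num, Real.Gamma_add_one (by norm_num), gamma_32]
  ring

private lemma pdf_eq (x : ℝ) :
    gaussianPDFReal 0 1 x = (Real.sqrt (2 * π))⁻¹ * Real.exp (-(1/2) * x ^ 2) := by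
  rw [gaussianPDFReal]
  norm_num
  ring_nf
  simp

private lemma gauss_density_integral (g : ℝ → ℝ) :
    ∫ x, g x ∂(gaussianReal 0 1) = ∫ x, gaussianPDFReal 0 1 x * g x := by
  rw [gaussianReal_of_var_ne_zero 0 one_ne_zero]
  have hmeas : Measurable fun x => (gaussianPDFReal 0 1 x).toNNReal :=
    (measurable_gaussianPDFReal 0 1).real_toNNReal
  have heq : gaussianPDF 0 1 = fun x => ((gaussianPDFReal 0 1 x).toNNReal : ℝ≥0∞) := by
    ext x; rw [gaussianPDF_def]; rfl
  rw [heq, integral_withDensity_eq_integral_smul hmeas g]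
  refine integral_congr_ae (Filter.Eventually.of_forall fun x => ?_)
  simp [NNReal.smul_def, Real.coe_toNNReal _ (gaussianPDFReal_nonneg 0 1 x)]

private lemma integrable_gauss_pow (k : ℕ) :
    Integrable (fun x : ℝ => x ^ k) (gaussianReal 0 1) := by
  rw [gaussianReal_of_var_ne_zero 0 one_ne_zero]
  rw [integrable_withDensity_iff (measurable_gaussianPDF 0 1)
    (Filter.Eventually.of_forall fun x => ENNReal.ofReal_lt_top)]
  have h : ∀ x : ℝ, x ^ k * (gaussianPDF 0 1 x).toReal
      = (Real.sqrt (2 * π))⁻¹ * (x ^ k * Real.exp (-(1/2) * x ^ 2)) := by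
    intro x
    rw [gaussianPDF_def, ENNReal.toReal_ofReal (gaussianPDFReal_nonneg 0 1 x), pdf_eq]
    ring
  simp only [h]
  have h2 : Integrable (fun x : ℝ => x ^ k * Real.exp (-(1/2) * x ^ 2)) := by
    have h3 := integrable_rpow_mul_exp_neg_mul_sq (b := (1:ℝ)/2) (by norm_num) (s := (k:ℝ))
      (lt_of_lt_of_le neg_one_lt_zero (Nat.cast_nonneg k))
    simpa [Real.rpow_natCast] using h3
  exact h2.const_mul _

private lemma gauss_core (k : ℕ) (hk : Even k) :
    ∫ x : ℝ, x ^ k * Real.exp (-(1/2) * x ^ 2) =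
      2 * ((1/2 : ℝ) ^ (-((k : ℝ) + 1) / 2) * (1 / 2) * Real.Gamma (((k : ℝ) + 1) / 2)) := by
  have h2 := integral_comp_abs (f := fun x : ℝ => x ^ k * Real.exp (-(1/2) * x ^ 2))
  simp only [hk.pow_abs, sq_abs] at h2
  rw [h2]
  have h3 := integral_rpow_mul_exp_neg_mul_rpow (p := 2) (q := (k : ℝ)) (b := 1/2)
    two_pos (lt_of_lt_of_le neg_one_lt_zero (Nat.cast_nonneg k)) (by norm_num)
  have h4 : ∀ x : ℝ, x ^ (k : ℝ) * Real.exp (-(1/2) * x ^ (2:ℝ))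
      = x ^ k * Real.exp (-(1/2) * x ^ 2) := by
    intro x
    rw [Real.rpow_natCast, show (2:ℝ) = ((2:ℕ):ℝ) by norm_num, Real.rpow_natCast]
  simp only [h4] at h3
  rw [h3]

private lemma gauss_pow_int (k : ℕ) (hk : Even k) :
    ∫ x, x ^ k ∂(gaussianReal 0 1) =
      (Real.sqrt (2 * π))⁻¹ *
        (2 * ((1/2 : ℝ) ^ (-((k : ℝ) + 1) / 2) * (1 / 2) * Real.Gamma (((k : ℝ) + 1) / 2))) := by
  rw [gauss_density_integral, ← gauss_core k hk, ← integral_const_mul]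
  refine integral_congr_ae (Filter.Eventually.of_forall fun x => ?_)
  show gaussianPDFReal 0 1 x * x ^ k = (Real.sqrt (2 * π))⁻¹ * (x ^ k * Real.exp (-(1/2) * x ^ 2))
  rw [pdf_eq]; ring

private lemma gauss_m2 : ∫ x, x ^ 2 ∂(gaussianReal 0 1) = 1 := by
  rw [gauss_pow_int 2 (by norm_num)]
  have h1 : (-(((2:ℕ) : ℝ) + 1) / 2) = -((3:ℝ)/2) := by norm_num
  have h2 : ((((2:ℕ) : ℝ) + 1) / 2) = (3:ℝ)/2 := by norm_num
  rw [h1, h2, half_rpow, neg_neg, rpow_3h, gamma_32,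
    Real.sqrt_mul (by norm_num : (0:ℝ) ≤ 2) π]
  have hs2 : (0:ℝ) < Real.sqrt 2 := Real.sqrt_pos.mpr two_pos
  have hsp : (0:ℝ) < Real.sqrt π := Real.sqrt_pos.mpr pi_pos
  field_simp

private lemma gauss_m4 : ∫ x, x ^ 4 ∂(gaussianReal 0 1) = 3 := by
  rw [gauss_pow_int 4 ⟨2, rfl⟩]
  have h1 : (-(((4:ℕ) : ℝ) + 1) / 2) = -((5:ℝ)/2) := by norm_num
  have h2 : ((((4:ℕ) : ℝ) + 1) / 2) = (5:ℝ)/2 := by norm_num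
  rw [h1, h2, half_rpow, neg_neg, rpow_5h, gamma_52,
    Real.sqrt_mul (by norm_num : (0:ℝ) ≤ 2) π]
  have hs2 : (0:ℝ) < Real.sqrt 2 := Real.sqrt_pos.mpr two_pos
  have hsp : (0:ℝ) < Real.sqrt π := Real.sqrt_pos.mpr pi_pos
  field_simp

private lemma pi_integrable {n : ℕ} (f : Fin n → ℝ → ℝ)
    (hf : ∀ i, Integrable (f i) γ) :
    Integrable (fun x : Fin n → ℝ => ∏ i, f i (x i)) (Measure.pi fun _ => γ) := by
  induction n with
  | zero => simpa using integrable_const (μ := Measure.pi fun _ : Fin 0 => γ) (1:ℝ)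
  | succ n ih =>
    have A := measurePreserving_piFinSuccAbove (fun _ : Fin (n+1) => γ) 0
    set e := MeasurableEquiv.piFinSuccAbove (fun _ : Fin (n+1) => ℝ) 0 with he
    have hint : Integrable
        (fun p : ℝ × (Fin n → ℝ) => f 0 p.1 * ∏ i : Fin n, f (Fin.succ i) (p.2 i))
        (Measure.prod γ (Measure.pi fun _ => γ)) :=
      (hf 0).mul_prod (ih (fun i => f i.succ) (fun i => hf i.succ))
    have key : (fun x : Fin (n+1) → ℝ => ∏ i, f i (x i)) ∘ e.symm
        = fun p : ℝ × (Fin n → ℝ) => f 0 p.1 * ∏ i : Fin n, f (Fin.succ i) (p.2 i) := by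
      ext p
      simp [e, MeasurableEquiv.piFinSuccAbove_symm_apply, Fin.insertNthEquiv,
        Fin.prod_univ_succ, Fin.insertNth_zero, Fin.zero_succAbove]
    exact ((A.symm e).integrable_comp_emb e.symm.measurableEmbedding).mp (key ▸ hint)

private lemma pi_integral {n : ℕ} (f : Fin n → ℝ → ℝ) :
    ∫ x, ∏ i, f i (x i) ∂(Measure.pi fun _ : Fin n => γ) = ∏ i, ∫ t, f i t ∂γ := by
  induction n with
  | zero => simp
  | succ n ih =>
    have A := measurePreserving_piFinSuccAbove (fun _ : Fin (n+1) => γ) 0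
    set e := MeasurableEquiv.piFinSuccAbove (fun _ : Fin (n+1) => ℝ) 0 with he
    calc ∫ x, ∏ i, f i (x i) ∂(Measure.pi fun _ : Fin (n+1) => γ)
        = ∫ p : ℝ × (Fin n → ℝ), f 0 p.1 * ∏ i : Fin n, f (Fin.succ i) (p.2 i)
            ∂(Measure.prod γ (Measure.pi fun _ => γ)) := by
          rw [← (A.symm e).integral_comp']
          refine integral_congr_ae (Filter.Eventually.of_forall fun p => ?_)
          simp [e, MeasurableEquiv.piFinSuccAbove_symm_apply, Fin.insertNthEquiv,
            Fin.prod_univ_succ, Fin.insertNth_zero, Fin.zero_succAbove]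
      _ = (∫ t, f 0 t ∂γ) *
            ∫ y : Fin n → ℝ, ∏ i : Fin n, f (Fin.succ i) (y i) ∂(Measure.pi fun _ => γ) := by
          rw [← integral_prod_mul]
      _ = (∫ t, f 0 t ∂γ) * ∏ i : Fin n, ∫ t, f (Fin.succ i) t ∂γ := by
          rw [ih]
      _ = ∏ i, ∫ t, f i t ∂γ := by rw [Fin.prod_univ_succ]

private lemma coord_pow {n : ℕ} (i : Fin n) (k : ℕ) :
    (∫ x : Fin n → ℝ, (x i) ^ k ∂(Measure.pi fun _ => γ)) = ∫ t, t ^ k ∂γ := by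
  have h := pi_integral (n := n) (fun j t => if j = i then t ^ k else 1)
  have h1 : (fun x : Fin n → ℝ => ∏ j, if j = i then (x j) ^ k else 1)
      = fun x : Fin n → ℝ => (x i) ^ k := by
    ext x; simp
  have h2 : ∀ j : Fin n, (∫ t, (if j = i then t ^ k else 1 : ℝ) ∂γ)
      = if j = i then ∫ t, t ^ k ∂γ else 1 := by
    intro j; split_ifs <;> simp
  rw [h1] at h
  rw [h]
  simp [h2]

private lemma coord_pow_integrable {n : ℕ} (i : Fin n) (k : ℕ) :
    Integrable (fun x : Fin n → ℝ => (x i) ^ k) (Measure.pi fun _ => γ) := by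
  have h := pi_integrable (n := n) (fun j t => if j = i then t ^ k else 1) ?_
  · have h1 : (fun x : Fin n → ℝ => ∏ j, if j = i then (x j) ^ k else 1)
        = fun x : Fin n → ℝ => (x i) ^ k := by
      ext x; simp
    rwa [h1] at h
  · intro j; split_ifs <;> simp [integrable_gauss_pow]

private lemma pair_integrable {n : ℕ} (i j : Fin n) :
    Integrable (fun x : Fin n → ℝ => (x i) ^ 2 * (x j) ^ 2) (Measure.pi fun _ => γ) := by
  have h := pi_integrable (n := n)
    (fun k t => (if k = i then t ^ 2 else 1) * (if k = j then t ^ 2 else 1)) ?_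
  · have h1 : (fun x : Fin n → ℝ =>
        ∏ k, (if k = i then (x k) ^ 2 else 1) * (if k = j then (x k) ^ 2 else 1))
        = fun x : Fin n → ℝ => (x i) ^ 2 * (x j) ^ 2 := by
      ext x; rw [Finset.prod_mul_distrib]; simp
    rwa [h1] at h
  · intro k
    rcases eq_or_ne k i with rfl | hki <;> rcases eq_or_ne k j with rfl | hkj <;>
      simp_all
    · have : (fun t : ℝ => t ^ 2 * t ^ 2) = fun t : ℝ => t ^ 4 := by ext t; ring
      rw [this]; exact integrable_gauss_pow 4
    · exact integrable_gauss_pow 2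
    · exact integrable_gauss_pow 2

private lemma pair_integral {n : ℕ} (i j : Fin n) :
    (∫ x : Fin n → ℝ, (x i) ^ 2 * (x j) ^ 2 ∂(Measure.pi fun _ => γ))
      = if i = j then 3 else 1 := by
  rcases eq_or_ne i j with rfl | hij
  · have h1 : (fun x : Fin n → ℝ => (x i) ^ 2 * (x i) ^ 2)
        = fun x : Fin n → ℝ => (x i) ^ 4 := by ext x; ring
    rw [h1, coord_pow, gauss_m4, if_pos rfl]
  · rw [if_neg hij]
    have h := pi_integral (n := n)
      (fun k t => (if k = i then t ^ 2 else 1) * (if k = j then t ^ 2 else 1))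
    have h1 : (fun x : Fin n → ℝ =>
        ∏ k, (if k = i then (x k) ^ 2 else 1) * (if k = j then (x k) ^ 2 else 1))
        = fun x : Fin n → ℝ => (x i) ^ 2 * (x j) ^ 2 := by
      ext x; rw [Finset.prod_mul_distrib]; simp
    rw [h1] at h
    rw [h]
    refine Finset.prod_eq_one fun k _ => ?_
    rcases eq_or_ne k i with rfl | hki <;> rcases eq_or_ne k j with rfl | hkj <;>
      simp_all [gauss_m2]

private lemma sum_sq_integral {n : ℕ} :
    (∫ x : Fin n → ℝ, ∑ i, (x i) ^ 2 ∂(Measure.pi fun _ => γ)) = n := by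
  rw [integral_finset_sum _ (fun i _ => coord_pow_integrable i 2)]
  simp [coord_pow, gauss_m2]

private lemma sum_sq_sq_integral {n : ℕ} :
    (∫ x : Fin n → ℝ, (∑ i, (x i) ^ 2) ^ 2 ∂(Measure.pi fun _ => γ))
      = (n : ℝ) ^ 2 + 2 * n := by
  have h1 : (fun x : Fin n → ℝ => (∑ i, (x i) ^ 2) ^ 2)
      = fun x : Fin n → ℝ => ∑ i, ∑ j, (x i) ^ 2 * (x j) ^ 2 := by
    ext x; rw [sq, Finset.sum_mul_sum]
  rw [h1, integral_finset_sum _ (fun i _ => integrable_finset_sum _ fun j _ => pair_integrable i j)]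
  have h2 : ∀ i : Fin n, (∫ x : Fin n → ℝ, ∑ j, (x i) ^ 2 * (x j) ^ 2
      ∂(Measure.pi fun _ => γ)) = (n : ℝ) + 2 := by
    intro i
    rw [integral_finset_sum _ (fun j _ => pair_integrable i j)]
    have h3 : ∀ j : Fin n, (∫ x : Fin n → ℝ, (x i) ^ 2 * (x j) ^ 2
        ∂(Measure.pi fun _ => γ)) = 1 + if i = j then (2:ℝ) else 0 := by
      intro j; rw [pair_integral]; split_ifs <;> norm_num
    simp only [h3]
    rw [Finset.sum_add_distrib]
    simp [Finset.sum_ite_eq]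
  simp only [h2]
  simp
  ring

/-- **The distribution of `y·x` has Poincaré constant `Ω(d)`.** For independent
`x ∼ N(0, I_d)`, `y ∼ N(0,1)`, `z = y·x` and `f(z) = ‖z‖₂²` (so that
`f(z) = y²‖x‖₂²`, `‖∇f(z)‖₂² = 4y²‖x‖₂²`):
`Var(f(z)) = E[y⁴‖x‖₂⁴] − (E[y²‖x‖₂²])² = 2d² + 6d`, `E[‖∇f(z)‖₂²] = 4d`, and
`Var(f(z)) = ((d+3)/2)·E[‖∇f(z)‖₂²]`. -/
theorem yx_poincare_constant (d : ℕ) :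
    (let μ := (stdGaussian d).prod (ProbabilityTheory.gaussianReal 0 1)
    ((∫ q : (Fin d → ℝ) × ℝ, q.2 ^ 4 * enormSq q.1 ^ 2 ∂μ) -
        (∫ q : (Fin d → ℝ) × ℝ, q.2 ^ 2 * enormSq q.1 ∂μ) ^ 2 =
      2 * (d : ℝ) ^ 2 + 6 * d) ∧
      (∫ q : (Fin d → ℝ) × ℝ, 4 * q.2 ^ 2 * enormSq q.1 ∂μ) = 4 * (d : ℝ) ∧
      (∫ q : (Fin d → ℝ) × ℝ, q.2 ^ 4 * enormSq q.1 ^ 2 ∂μ) -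
          (∫ q : (Fin d → ℝ) × ℝ, q.2 ^ 2 * enormSq q.1 ∂μ) ^ 2 =
        (((d : ℝ) + 3) / 2) * ∫ q : (Fin d → ℝ) × ℝ, 4 * q.2 ^ 2 * enormSq q.1 ∂μ) := by
  have hsd : stdGaussian d = Measure.pi fun _ : Fin d => γ := rfl
  haveI : SFinite (stdGaussian d) := by rw [hsd]; infer_instance
  have hA : (∫ q : (Fin d → ℝ) × ℝ, q.2 ^ 4 * enormSq q.1 ^ 2
      ∂((stdGaussian d).prod γ)) = 3 * ((d : ℝ) ^ 2 + 2 * d) := by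
    calc (∫ q : (Fin d → ℝ) × ℝ, q.2 ^ 4 * enormSq q.1 ^ 2 ∂((stdGaussian d).prod γ))
        = (∫ x : Fin d → ℝ, enormSq x ^ 2 ∂(stdGaussian d)) * (∫ y : ℝ, y ^ 4 ∂γ) := by
          rw [← integral_prod_mul]
          exact integral_congr_ae (Filter.Eventually.of_forall fun q => mul_comm _ _)
      _ = 3 * ((d : ℝ) ^ 2 + 2 * d) := by
          rw [hsd, gauss_m4]
          rw [show (∫ x : Fin d → ℝ, enormSq x ^ 2 ∂(Measure.pi fun _ => γ))
            = ∫ x : Fin d → ℝ, (∑ i, (x i) ^ 2) ^ 2 ∂(Measure.pi fun _ => γ) from rfl,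
            sum_sq_sq_integral]
          ring
  have hB : (∫ q : (Fin d → ℝ) × ℝ, q.2 ^ 2 * enormSq q.1
      ∂((stdGaussian d).prod γ)) = (d : ℝ) := by
    calc (∫ q : (Fin d → ℝ) × ℝ, q.2 ^ 2 * enormSq q.1 ∂((stdGaussian d).prod γ))
        = (∫ x : Fin d → ℝ, enormSq x ∂(stdGaussian d)) * (∫ y : ℝ, y ^ 2 ∂γ) := by
          rw [← integral_prod_mul]
          exact integral_congr_ae (Filter.Eventually.of_forall fun q => mul_comm _ _)
      _ = (d : ℝ) := by
          rw [hsd, gauss_m2,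
            show (∫ x : Fin d → ℝ, enormSq x ∂(Measure.pi fun _ => γ))
            = ∫ x : Fin d → ℝ, ∑ i, (x i) ^ 2 ∂(Measure.pi fun _ => γ) from rfl,
            sum_sq_integral]
          ring
  have hC : (∫ q : (Fin d → ℝ) × ℝ, 4 * q.2 ^ 2 * enormSq q.1
      ∂((stdGaussian d).prod γ)) = 4 * (d : ℝ) := by
    calc (∫ q : (Fin d → ℝ) × ℝ, 4 * q.2 ^ 2 * enormSq q.1 ∂((stdGaussian d).prod γ))
        = (∫ x : Fin d → ℝ, enormSq x ∂(stdGaussian d)) * (∫ y : ℝ, 4 * y ^ 2 ∂γ) := by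
          rw [← integral_prod_mul]
          exact integral_congr_ae (Filter.Eventually.of_forall fun q => by ring)
      _ = 4 * (d : ℝ) := by
          rw [integral_const_mul, hsd, gauss_m2,
            show (∫ x : Fin d → ℝ, enormSq x ∂(Measure.pi fun _ => γ))
            = ∫ x : Fin d → ℝ, ∑ i, (x i) ^ 2 ∂(Measure.pi fun _ => γ) from rfl,
            sum_sq_integral]
          ring
  refine ⟨?_, ?_, ?_⟩
  · rw [hA, hB]; ring
  · exact hC
  · rw [hA, hB, hC]; ring

end
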